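/- Let k have characteristic 2 and U = u(m). Then Ext¹_U(V₁, V₁) = 0: every short exact sequence 0 → V₁ → E → V₁ → 0 of U-modules splits, where V₁ is the 3-dimensional simple module. -/

import Mathlib

/-- Ext¹(V₁,V₁) = 0 over u(m) (characteristic 2): every short exact sequence
0 → V₁ → E → V₁ → 0 of u(m)-modules splits, where V₁ is the 3-dimensional simple
module given by the matrices A₁, B₁, C₁. -/
theorem um_ext_V1_V1_zero (k : Type*) [Field k] [IsAlgClosed k] [CharP k 2]
    (E : Type*) [AddCommGroup E] [Module k E] [FiniteDimensional k E]
    (A B C : Module.End k E)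
    (hab : A*B + B*A = C) (hac : A*C + C*A = A) (hbc : B*C + C*B = B)
    (ha4 : A^4 = 0) (hb4 : B^4 = 0) (hc2 : C^2 = C) :
    let A₁ := Matrix.mulVecLin (!![0,0,0; 1,0,0; 0,1,0] : Matrix (Fin 3) (Fin 3) k)
    let B₁ := Matrix.mulVecLin (!![0,1,0; 0,0,1; 0,0,0] : Matrix (Fin 3) (Fin 3) k)
    let C₁ := Matrix.mulVecLin (!![1,0,0; 0,0,0; 0,0,1] : Matrix (Fin 3) (Fin 3) k)
    ∀ (f : (Fin 3 → k) →ₗ[k] E) (g : E →ₗ[k] (Fin 3 → k)),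
      Function.Injective f → Function.Surjective g →
      LinearMap.range f = LinearMap.ker g →
      A ∘ₗ f = f ∘ₗ A₁ → B ∘ₗ f = f ∘ₗ B₁ → C ∘ₗ f = f ∘ₗ C₁ →
      g ∘ₗ A = A₁ ∘ₗ g → g ∘ₗ B = B₁ ∘ₗ g → g ∘ₗ C = C₁ ∘ₗ g →
      ∃ s : (Fin 3 → k) →ₗ[k] E, g ∘ₗ s = LinearMap.id ∧
        A ∘ₗ s = s ∘ₗ A₁ ∧ B ∘ₗ s = s ∘ₗ B₁ ∧ C ∘ₗ s = s ∘ₗ C₁ := by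
  intro A₁ B₁ C₁ f g hfinj hgsurj hrange hAf hBf hCf hgA hgB hgC
  -- pointwise versions of the intertwining hypotheses
  have hAf' : ∀ x, A (f x) = f (A₁ x) := fun x => LinearMap.congr_fun hAf x
  have hBf' : ∀ x, B (f x) = f (B₁ x) := fun x => LinearMap.congr_fun hBf x
  have hCf' : ∀ x, C (f x) = f (C₁ x) := fun x => LinearMap.congr_fun hCf x
  have hgA' : ∀ x, g (A x) = A₁ (g x) := fun x => LinearMap.congr_fun hgA x
  have hgB' : ∀ x, g (B x) = B₁ (g x) := fun x => LinearMap.congr_fun hgB x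
  have hgC' : ∀ x, g (C x) = C₁ (g x) := fun x => LinearMap.congr_fun hgC x
  -- evaluating the three matrices
  have hA1 : ∀ x : Fin 3 → k, A₁ x = ![0, x 0, x 1] := by
    intro x; funext i; fin_cases i <;>
      simp [A₁, Matrix.mulVecLin, Matrix.mulVec, dotProduct, Fin.sum_univ_three]
  have hB1 : ∀ x : Fin 3 → k, B₁ x = ![x 1, x 2, 0] := by
    intro x; funext i; fin_cases i <;>
      simp [B₁, Matrix.mulVecLin, Matrix.mulVec, dotProduct, Fin.sum_univ_three]
  have hC1 : ∀ x : Fin 3 → k, C₁ x = ![x 0, 0, x 2] := by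
    intro x; funext i; fin_cases i <;>
      simp [C₁, Matrix.mulVecLin, Matrix.mulVec, dotProduct, Fin.sum_univ_three]
  -- characteristic two facts
  have h2k : ∀ x : k, x + x = 0 := fun x => CharTwo.add_self_eq_zero x
  have h2E : ∀ x : E, x + x = 0 := fun x => by
    rw [← two_smul k x, CharTwo.two_eq_zero, zero_smul]
  have hsolve : ∀ a b : E, a + b = 0 → b = a := by
    intro a b h
    have : a + (a + b) = a + 0 := by rw [h]
    rwa [← add_assoc, h2E a, zero_add, add_zero] at this
  -- exactness facts
  have hgf : ∀ x, g (f x) = 0 := by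
    intro x
    have : f x ∈ LinearMap.ker g := by rw [← hrange]; exact LinearMap.mem_range_self f x
    exact LinearMap.mem_ker.mp this
  have hker : ∀ y, g y = 0 → ∃ x, f x = y := by
    intro y hy
    have : y ∈ LinearMap.range f := by rw [hrange]; exact LinearMap.mem_ker.mpr hy
    exact this
  have h0 : (![0,0,0] : Fin 3 → k) = 0 := by funext i; fin_cases i <;> simp
  -- find a preimage of e₁
  obtain ⟨w, hw⟩ := hgsurj (![1,0,0] : Fin 3 → k)
  set v₀ := C w with hv₀def
  have hCv₀ : C v₀ = v₀ := by
    have h := LinearMap.congr_fun hc2 w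
    rw [pow_two, Module.End.mul_apply] at h
    exact h
  have hgv₀ : g v₀ = ![1,0,0] := by
    rw [hv₀def, hgC' w, hw, hC1]
    funext i; fin_cases i <;> simp
  -- correct it to kill B
  have hgBv₀ : g (B v₀) = 0 := by rw [hgB', hgv₀, hB1, ← h0]; funext i; fin_cases i <;> simp
  obtain ⟨u, hu⟩ := hker (B v₀) hgBv₀
  have hCBv₀ : C (B v₀) = 0 := by
    have h := LinearMap.congr_fun hbc v₀
    rw [LinearMap.add_apply, Module.End.mul_apply, Module.End.mul_apply, hCv₀] at h
    exact add_eq_left.mp h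
  have hC1u : C₁ u = 0 := by
    apply hfinj
    rw [← hCf', hu, hCBv₀, map_zero]
  have hu0 : u 0 = 0 := by have := congrFun hC1u 0; rw [hC1] at this; simpa using this
  have hu2 : u 2 = 0 := by have := congrFun hC1u 2; rw [hC1] at this; simpa using this
  set v := v₀ + f ![0, 0, u 1] with hvdef
  have hgv : g v = ![1,0,0] := by rw [hvdef, map_add, hgv₀, hgf, add_zero]
  have hCv : C v = v := by
    have h1 : C₁ ![0, 0, u 1] = ![0, 0, u 1] := by
      rw [hC1]; funext i; fin_cases i <;> simp
    rw [hvdef, map_add, hCv₀, hCf', h1]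
  have hBv : B v = 0 := by
    have h1 : B₁ ![0, 0, u 1] = ![0, u 1, 0] := by
      rw [hB1]; funext i; fin_cases i <;> simp
    have h2 : u + ![0, u 1, 0] = 0 := by
      funext i; fin_cases i <;> simp [hu0, hu2, h2k]
    rw [hvdef, map_add, ← hu, hBf', h1, ← map_add, h2, map_zero]
  -- key identities for v, Av, A²v
  have hBAv : B (A v) = v := by
    have h := LinearMap.congr_fun hab v
    rw [LinearMap.add_apply, Module.End.mul_apply, Module.End.mul_apply, hBv, map_zero,
      zero_add, hCv] at h
    exact h
  have hCAv : C (A v) = 0 := by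
    have h := LinearMap.congr_fun hac v
    rw [LinearMap.add_apply, Module.End.mul_apply, Module.End.mul_apply, hCv] at h
    exact add_eq_left.mp h
  have hCA2v : C (A (A v)) = A (A v) := by
    have h := LinearMap.congr_fun hac (A v)
    rw [LinearMap.add_apply, Module.End.mul_apply, Module.End.mul_apply, hCAv, map_zero,
      zero_add] at h
    exact h
  have hBA2v : B (A (A v)) = A v := by
    have h := LinearMap.congr_fun hab (A v)
    rw [LinearMap.add_apply, Module.End.mul_apply, Module.End.mul_apply, hBAv, hCAv] at h
    exact (hsolve _ _ h).trans rfl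
  -- g on v, Av, A²v
  have hgAv : g (A v) = ![0,1,0] := by
    rw [hgA', hgv, hA1]; funext i; fin_cases i <;> simp
  have hgA2v : g (A (A v)) = ![0,0,1] := by
    rw [hgA', hgAv, hA1]; funext i; fin_cases i <;> simp
  -- A³ v = 0
  have hA3 : A (A (A v)) = 0 := by
    have hgA3v : g (A (A (A v))) = 0 := by
      rw [hgA', hgA2v, hA1, ← h0]; funext i; fin_cases i <;> simp
    obtain ⟨t, ht⟩ := hker _ hgA3v
    have hCA3v : C (A (A (A v))) = 0 := by
      have h := LinearMap.congr_fun hac (A (A v))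
      rw [LinearMap.add_apply, Module.End.mul_apply, Module.End.mul_apply, hCA2v] at h
      exact add_eq_left.mp h
    have hBA3v : B (A (A (A v))) = 0 := by
      have h := LinearMap.congr_fun hab (A (A v))
      rw [LinearMap.add_apply, Module.End.mul_apply, Module.End.mul_apply, hBA2v, hCA2v] at h
      exact add_eq_left.mp (by rwa [add_comm] at h)
    have hC1t : C₁ t = 0 := by apply hfinj; rw [← hCf', ht, hCA3v, map_zero]
    have hB1t : B₁ t = 0 := by apply hfinj; rw [← hBf', ht, hBA3v, map_zero]
    have ht0 : t 0 = 0 := by have := congrFun hC1t 0; rw [hC1] at this; simpa using this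
    have ht2 : t 2 = 0 := by have := congrFun hC1t 2; rw [hC1] at this; simpa using this
    have ht1 : t 1 = 0 := by have := congrFun hB1t 0; rw [hB1] at this; simpa using this
    have : t = 0 := by funext i; fin_cases i <;> assumption
    rw [← ht, this, map_zero]
  -- the splitting
  refine ⟨{ toFun := fun x => x 0 • v + x 1 • A v + x 2 • A (A v),
            map_add' := by intro x y; simp [add_smul]; abel,
            map_smul' := by intro c x; simp [mul_smul, smul_add] }, ?_, ?_, ?_, ?_⟩
  · apply LinearMap.ext; intro x
    simp only [LinearMap.comp_apply, LinearMap.coe_mk, AddHom.coe_mk, LinearMap.id_apply,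
      map_add, map_smul, hgv, hgAv, hgA2v]
    funext i; fin_cases i <;> simp
  · apply LinearMap.ext; intro x
    simp only [LinearMap.comp_apply, LinearMap.coe_mk, AddHom.coe_mk,
      map_add, map_smul, hA3, hA1 x, smul_zero, add_zero]
    simp [Matrix.cons_val_zero, Matrix.cons_val_one]
  · apply LinearMap.ext; intro x
    simp only [LinearMap.comp_apply, LinearMap.coe_mk, AddHom.coe_mk,
      map_add, map_smul, hBv, hBAv, hBA2v, hB1 x, smul_zero, zero_add]
    simp
  · apply LinearMap.ext; intro x
    simp only [LinearMap.comp_apply, LinearMap.coe_mk, AddHom.coe_mk,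
      map_add, map_smul, hCv, hCAv, hCA2v, hC1 x, smul_zero, add_zero]
    simp
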